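/- Let ω : I → ℝ satisfy ω(i) > 0 for all i ∈ I. Let k ≥ 1 and let a_1,…,a_k, b_1,…,b_k ∈ I with a_i ≠ b_i for each i; set v_i = e_{a_i} − e_{b_i}. Assume: the indices a_1,…,a_k are pairwise distinct; ω(a_i) > ω(b_i) for each i; Q(v_i, v_{i+1}) = 1 for 1 ≤ i < k; and Q(v_i, v_j) = 0 whenever |i−j| ≥ 2. Then there exist pairwise distinct indices c_1, …, c_{k+1} ∈ I such that either v_i = e_{c_i} − e_{c_{i+1}} for all 1 ≤ i ≤ k, or v_i = e_{c_{i+1}} − e_{c_i} for all 1 ≤ i ≤ k. -/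
import Mathlib


/-- The free ℤ-module with basis {h} ∪ {e_i : i ∈ I}:
the second homology lattice of a blow-up of ℂP². -/
abbrev BlowupLattice (I : Type*) : Type _ := ℤ × (I →₀ ℤ)

/-- The class h of the line. -/
def Hclass {I : Type*} : BlowupLattice I := (1, 0)

/-- The exceptional class e_i. -/
noncomputable def Eclass {I : Type*} (i : I) : BlowupLattice I := (0, Finsupp.single i 1)

/-- The intersection form: Q(h,h) = 1, Q(e_i,e_i) = -1, and all other pairings of
distinct basis vectors vanish. -/
def Qform {I : Type*} (v w : BlowupLattice I) : ℤ :=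
  v.1 * w.1 - v.2.sum fun i c => c * w.2 i

lemma Qform_EE {I : Type*} [DecidableEq I] (x y z w : I) :
    Qform (Eclass x - Eclass y : BlowupLattice I) (Eclass z - Eclass w) =
    (if z = y then 1 else 0) + (if w = x then 1 else 0)
      - (if z = x then 1 else 0) - (if w = y then 1 else 0) := by
  have hs : ((Finsupp.single x 1 - Finsupp.single y 1 : I →₀ ℤ)).sum
      (fun i c => c * ((Finsupp.single z 1 - Finsupp.single w 1 : I →₀ ℤ)) i)
      = ((Finsupp.single z 1 - Finsupp.single w 1 : I →₀ ℤ)) x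
        - ((Finsupp.single z 1 - Finsupp.single w 1 : I →₀ ℤ)) y := by
    rw [Finsupp.sum_sub_index (by intros; ring)]
    simp [Finsupp.sum_single_index]
  simp only [Qform, Eclass, Prod.fst_sub, Prod.snd_sub, hs]
  simp [Finsupp.single_apply]
  ring

lemma chain_lt (g : ℕ → ℝ) (k : ℕ) (h : ∀ i, 1 ≤ i → i ≤ k → g (i + 1) < g i) :
    ∀ i j, 1 ≤ i → i < j → j ≤ k + 1 → g j < g i := by
  intro i j hi hij hj
  induction j with
  | zero => omega
  | succ n ih =>
    rcases Nat.lt_or_ge i n with h' | h'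
    · exact lt_trans (h n (by omega) (by omega)) (ih (by omega) (by omega))
    · have hin : i = n := by omega
      subst hin
      exact h i (by omega) (by omega)

theorem stmt_3 {I : Type*} [DecidableEq I] (ω : I → ℝ) (hω : ∀ i, 0 < ω i)
    (k : ℕ) (hk : 1 ≤ k) (a b : ℕ → I)
    (hab : ∀ i, 1 ≤ i → i ≤ k → a i ≠ b i)
    (v : ℕ → BlowupLattice I)
    (hv : ∀ i, 1 ≤ i → i ≤ k → v i = Eclass (a i) - Eclass (b i))
    (hdist : ∀ i j, 1 ≤ i → i ≤ k → 1 ≤ j → j ≤ k → i ≠ j → a i ≠ a j)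
    (hωab : ∀ i, 1 ≤ i → i ≤ k → ω (b i) < ω (a i))
    (hcons : ∀ i, 1 ≤ i → i < k → Qform (v i) (v (i + 1)) = 1)
    (hfar : ∀ i j, 1 ≤ i → i ≤ k → 1 ≤ j → j ≤ k → (i + 2 ≤ j ∨ j + 2 ≤ i) →
      Qform (v i) (v j) = 0) :
    ∃ c : ℕ → I,
      (∀ i j, 1 ≤ i → i ≤ k + 1 → 1 ≤ j → j ≤ k + 1 → i ≠ j → c i ≠ c j) ∧
      ((∀ i, 1 ≤ i → i ≤ k → v i = Eclass (c i) - Eclass (c (i + 1))) ∨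
       (∀ i, 1 ≤ i → i ≤ k → v i = Eclass (c (i + 1)) - Eclass (c i))) := by
  -- Step dichotomy from consecutive intersection numbers
  have hstep : ∀ i, 1 ≤ i → i < k →
      (b i = a (i + 1) ∧ a i ≠ b (i + 1)) ∨ (a i = b (i + 1) ∧ b i ≠ a (i + 1)) := by
    intro i h1 h2
    have E := hcons i h1 h2
    rw [hv i h1 (by omega), hv (i + 1) (by omega) (by omega), Qform_EE] at E
    have haa : a (i + 1) ≠ a i := hdist (i + 1) i (by omega) (by omega) h1 (by omega) (by omega)
    have hab2 : a (i + 1) ≠ b (i + 1) := hab (i + 1) (by omega) (by omega)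
    rw [if_neg haa] at E
    by_cases h3 : a (i + 1) = b i
    · left
      refine ⟨h3.symm, ?_⟩
      rw [if_pos h3] at E
      by_cases h4 : b (i + 1) = b i
      · exact absurd (h3.trans h4.symm) hab2
      · rw [if_neg h4] at E
        by_cases h5 : b (i + 1) = a i
        · rw [if_pos h5] at E; omega
        · exact fun h => h5 h.symm
    · rw [if_neg h3] at E
      by_cases h5 : b (i + 1) = a i
      · exact Or.inr ⟨h5.symm, fun h => h3 h.symm⟩
      · rw [if_neg h5] at E
        by_cases h4 : b (i + 1) = b i
        · rw [if_pos h4] at E; omega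
        · rw [if_neg h4] at E; omega
  -- Orientation is constant along the chain
  have horient : (∀ i, 1 ≤ i → i < k → b i = a (i + 1)) ∨
      (∀ i, 1 ≤ i → i < k → a i = b (i + 1)) := by
    rcases Nat.lt_or_ge k 2 with hk1 | hk2
    · left; intro i h1 h2; omega
    · rcases hstep 1 le_rfl (by omega) with ⟨hF1, _⟩ | ⟨hB1, _⟩
      · left
        intro i
        induction i with
        | zero => omega
        | succ n ih =>
          intro h1 h2
          rcases Nat.eq_or_lt_of_le h1 with hn1 | hn1
          · have : n = 0 := by omega
            subst this; exact hF1
          · have hn := ih (by omega) (by omega)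
            rcases hstep (n + 1) (by omega) h2 with ⟨hf, _⟩ | ⟨hb2, _⟩
            · exact hf
            · exfalso
              have E := hfar n (n + 2) (by omega) (by omega) (by omega) (by omega)
                (Or.inl (by omega))
              rw [hv n (by omega) (by omega), hv (n + 2) (by omega) (by omega), Qform_EE] at E
              have e1 : a (n + 2) ≠ b n := by
                rw [hn]; exact fun h => hdist (n + 2) (n + 1) (by omega) (by omega)
                  (by omega) (by omega) (by omega) h
              have e2 : b (n + 2) ≠ a n := by
                rw [← hb2]; exact fun h => hdist (n + 1) n (by omega) (by omega)
                  (by omega) (by omega) (by omega) h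
              have e3 : a (n + 2) ≠ a n := hdist (n + 2) n (by omega) (by omega)
                (by omega) (by omega) (by omega)
              have e4 : b (n + 2) = b n := by rw [← hb2, ← hn]
              rw [if_neg e1, if_neg e2, if_neg e3, if_pos e4] at E
              omega
      · right
        intro i
        induction i with
        | zero => omega
        | succ n ih =>
          intro h1 h2
          rcases Nat.eq_or_lt_of_le h1 with hn1 | hn1
          · have : n = 0 := by omega
            subst this; exact hB1
          · have hn := ih (by omega) (by omega)
            rcases hstep (n + 1) (by omega) h2 with ⟨hf, _⟩ | ⟨hb2, _⟩
            · exact absurd (hn.trans hf) (hdist n (n + 2) (by omega) (by omega)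
                (by omega) (by omega) (by omega))
            · exact hb2
  rcases horient with hF | hB
  · -- forward chain: c i = a i for i ≤ k, c (k+1) = b k
    refine ⟨fun i => if i ≤ k then a i else b k, ?_, Or.inl ?_⟩
    all_goals
      have hc : ∀ i, 1 ≤ i → i ≤ k →
          (if i ≤ k then a i else b k) = a i ∧
          (if i + 1 ≤ k then a (i + 1) else b k) = b i := by
        intro i h1 h2
        refine ⟨if_pos h2, ?_⟩
        by_cases h3 : i + 1 ≤ k
        · rw [if_pos h3, ← hF i h1 (by omega)]
        · have : i = k := by omega
          rw [if_neg h3, this]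
    · -- injectivity
      have hdec : ∀ i, 1 ≤ i → i ≤ k →
          ω (if i + 1 ≤ k then a (i + 1) else b k) < ω (if i ≤ k then a i else b k) := by
        intro i h1 h2
        rw [(hc i h1 h2).1, (hc i h1 h2).2]
        exact hωab i h1 h2
      have key : ∀ p q, 1 ≤ p → p < q → q ≤ k + 1 →
          ω (if q ≤ k then a q else b k) < ω (if p ≤ k then a p else b k) :=
        fun p q hp hpq hq =>
          chain_lt (fun n => ω (if n ≤ k then a n else b k)) k hdec p q hp hpq hq
      intro i j hi hik hj hjk hij hcc
      beta_reduce at hcc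
      rcases Nat.lt_or_ge i j with h' | h'
      · have := key i j hi h' hjk
        rw [hcc] at this
        exact lt_irrefl _ this
      · have := key j i hj (by omega) hik
        rw [hcc] at this
        exact lt_irrefl _ this
    · intro i h1 h2
      beta_reduce
      rw [hv i h1 h2, (hc i h1 h2).1, (hc i h1 h2).2]
  · -- backward chain: c 1 = b 1, c i = a (i-1) for i ≥ 2
    refine ⟨fun i => if 2 ≤ i then a (i - 1) else b 1, ?_, Or.inr ?_⟩
    all_goals
      have hc : ∀ i, 1 ≤ i → i ≤ k →
          (if 2 ≤ i + 1 then a (i + 1 - 1) else b 1) = a i ∧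
          (if 2 ≤ i then a (i - 1) else b 1) = b i := by
        intro i h1 h2
        constructor
        · rw [if_pos (by omega), Nat.add_sub_cancel]
        · by_cases h3 : 2 ≤ i
          · rw [if_pos h3]
            have h4 : i - 1 + 1 = i := by omega
            have := hB (i - 1) (by omega) (by omega)
            rw [h4] at this
            exact this
          · have : i = 1 := by omega
            rw [if_neg h3, this]
    · -- injectivity (ω increasing, so use negation)
      have hinc : ∀ i, 1 ≤ i → i ≤ k →
          -ω (if 2 ≤ i + 1 then a (i + 1 - 1) else b 1) <
          -ω (if 2 ≤ i then a (i - 1) else b 1) := by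
        intro i h1 h2
        rw [(hc i h1 h2).1, (hc i h1 h2).2]
        exact neg_lt_neg (hωab i h1 h2)
      have key : ∀ p q, 1 ≤ p → p < q → q ≤ k + 1 →
          -ω (if 2 ≤ q then a (q - 1) else b 1) < -ω (if 2 ≤ p then a (p - 1) else b 1) :=
        fun p q hp hpq hq =>
          chain_lt (fun n => -ω (if 2 ≤ n then a (n - 1) else b 1)) k hinc p q hp hpq hq
      intro i j hi hik hj hjk hij hcc
      beta_reduce at hcc
      rcases Nat.lt_or_ge i j with h' | h'
      · have := key i j hi h' hjk
        rw [hcc] at this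
        exact lt_irrefl _ this
      · have := key j i hj (by omega) hik
        rw [hcc] at this
        exact lt_irrefl _ this
    · intro i h1 h2
      beta_reduce
      rw [hv i h1 h2, (hc i h1 h2).1, (hc i h1 h2).2]
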